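/- Let (Y, σ) be a subspace of a connected space (X, τ). For every connected expansion σ* ≥ σ there exists a connected expansion τ* ≥ τ such that τ*|Y = σ*. One such expansion is τ* = τ ∨ {S ∪ (X \ cl(Y)) : S ∈ σ*}. -/

import Mathlib

section Stmt6Aux

variable {X : Type*} [t : TopologicalSpace X] {Y : Set X} {σs : TopologicalSpace Y}

/-- Preimage of a basic generator of the second kind is the original set. -/
lemma stmt6_preim (Y : Set X) (S : Set Y) :
    (fun y : Y => (y : X)) ⁻¹' ((fun y : Y => (y : X)) '' S ∪ (closure Y)ᶜ) = S := by
  ext y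
  simp only [Set.mem_preimage, Set.mem_union]
  constructor
  · rintro (⟨z, hz, hzeq⟩ | h)
    · rwa [← Subtype.coe_injective hzeq]
    · exact absurd (subset_closure y.2) h
  · intro h
    exact Or.inl ⟨y, h, rfl⟩

/-- Preimages of generated opens are `σs`-open. -/
lemma stmt6_pre (hexp : σs ≤ TopologicalSpace.induced (fun y : Y => (y : X)) t) :
    ∀ U : Set X, TopologicalSpace.GenerateOpen
      ({B : Set X | ∃ S : Set Y, σs.IsOpen S ∧
          B = (fun y : Y => (y : X)) '' S ∪ (closure Y)ᶜ} ∪ {U | t.IsOpen U}) U →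
      σs.IsOpen ((fun y : Y => (y : X)) ⁻¹' U) := by
  intro U hU
  induction hU with
  | basic U hU =>
    rcases hU with ⟨S, hS, rfl⟩ | hU
    · rw [stmt6_preim]; exact hS
    · exact hexp _ ⟨U, hU, rfl⟩
  | univ => exact σs.isOpen_univ
  | inter U V _ _ ihU ihV => exact σs.isOpen_inter _ _ ihU ihV
  | sUnion 𝒮 _ ih =>
    have heq : (fun y : Y => (y : X)) ⁻¹' ⋃₀ 𝒮 =
        ⋃₀ ((fun U => (fun y : Y => (y : X)) ⁻¹' U) '' 𝒮) := by
      rw [Set.sUnion_image, Set.preimage_sUnion]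
    rw [heq]
    refine σs.isOpen_sUnion _ ?_
    rintro s ⟨U, hU, rfl⟩
    exact ih U hU

/-- Structure of generated opens: every point has a neighborhood of a controlled form. -/
lemma stmt6_key :
    ∀ U : Set X, TopologicalSpace.GenerateOpen
      ({B : Set X | ∃ S : Set Y, σs.IsOpen S ∧
          B = (fun y : Y => (y : X)) '' S ∪ (closure Y)ᶜ} ∪ {U | t.IsOpen U}) U →
      ∀ x ∈ U, ∃ W : Set X, IsOpen W ∧ x ∈ W ∧
        (W ⊆ U ∨ ∃ S : Set Y, σs.IsOpen S ∧ x ∈ (fun y : Y => (y : X)) '' S ∧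
          W ∩ ((fun y : Y => (y : X)) '' S ∪ (closure Y)ᶜ) ⊆ U) := by
  intro U hU
  induction hU with
  | basic U hU =>
    rcases hU with ⟨S, hS, rfl⟩ | hU
    · intro x hx
      rcases hx with hx | hx
      · exact ⟨Set.univ, isOpen_univ, trivial, Or.inr ⟨S, hS, hx, fun z hz => hz.2⟩⟩
      · exact ⟨(closure Y)ᶜ, isOpen_compl_iff.mpr isClosed_closure, hx,
          Or.inl Set.subset_union_right⟩
    · intro x hx
      exact ⟨U, hU, hx, Or.inl subset_rfl⟩
  | univ => exact fun x _ => ⟨Set.univ, isOpen_univ, trivial, Or.inl (by simp)⟩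
  | inter U V hU hV ihU ihV =>
    intro x hx
    obtain ⟨W₁, hW₁, hxW₁, h₁⟩ := ihU x hx.1
    obtain ⟨W₂, hW₂, hxW₂, h₂⟩ := ihV x hx.2
    refine ⟨W₁ ∩ W₂, IsOpen.inter hW₁ hW₂, ⟨hxW₁, hxW₂⟩, ?_⟩
    rcases h₁ with h₁ | ⟨S₁, hS₁, hxS₁, h₁⟩
    · rcases h₂ with h₂ | ⟨S₂, hS₂, hxS₂, h₂⟩
      · exact Or.inl fun z hz => ⟨h₁ hz.1, h₂ hz.2⟩
      · exact Or.inr ⟨S₂, hS₂, hxS₂, fun z hz => ⟨h₁ hz.1.1, h₂ ⟨hz.1.2, hz.2⟩⟩⟩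
    · rcases h₂ with h₂ | ⟨S₂, hS₂, hxS₂, h₂⟩
      · exact Or.inr ⟨S₁, hS₁, hxS₁, fun z hz => ⟨h₁ ⟨hz.1.1, hz.2⟩, h₂ hz.1.2⟩⟩
      · refine Or.inr ⟨S₁ ∩ S₂, σs.isOpen_inter _ _ hS₁ hS₂, ?_, ?_⟩
        · rw [Set.image_inter Subtype.coe_injective]
          exact ⟨hxS₁, hxS₂⟩
        · intro z hz
          rw [Set.image_inter Subtype.coe_injective] at hz
          rcases hz with ⟨⟨hz₁, hz₂⟩, hz3⟩
          rcases hz3 with ⟨hzS₁, hzS₂⟩ | hzC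
          · exact ⟨h₁ ⟨hz₁, Or.inl hzS₁⟩, h₂ ⟨hz₂, Or.inl hzS₂⟩⟩
          · exact ⟨h₁ ⟨hz₁, Or.inr hzC⟩, h₂ ⟨hz₂, Or.inr hzC⟩⟩
  | sUnion 𝒮 h𝒮 ih =>
    rintro x ⟨U, hU𝒮, hxU⟩
    obtain ⟨W, hW, hxW, h⟩ := ih U hU𝒮 x hxU
    refine ⟨W, hW, hxW, ?_⟩
    rcases h with h | ⟨S, hS, hxS, h⟩
    · exact Or.inl fun z hz => ⟨U, hU𝒮, h hz⟩
    · exact Or.inr ⟨S, hS, hxS, fun z hz => ⟨U, hU𝒮, h hz⟩⟩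

/-- If a generated-open partition has one side missing `Y`, we get a contradiction with
connectedness of `(X, t)`. -/
lemma stmt6_main (hX : ConnectedSpace X) (u v : Set X)
    (hu : TopologicalSpace.GenerateOpen
      ({B : Set X | ∃ S : Set Y, σs.IsOpen S ∧
          B = (fun y : Y => (y : X)) '' S ∪ (closure Y)ᶜ} ∪ {U | t.IsOpen U}) u)
    (hv : TopologicalSpace.GenerateOpen
      ({B : Set X | ∃ S : Set Y, σs.IsOpen S ∧
          B = (fun y : Y => (y : X)) '' S ∪ (closure Y)ᶜ} ∪ {U | t.IsOpen U}) v)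
    (hcov : Set.univ ⊆ u ∪ v) (hdisj : u ∩ v = ∅) (hYv : Y ∩ v = ∅)
    (hune : u.Nonempty) (hvne : v.Nonempty) : False := by
  have hdisj' : ∀ z, z ∉ u ∩ v := Set.eq_empty_iff_forall_notMem.mp hdisj
  have hYv' : ∀ z, z ∉ Y ∩ v := Set.eq_empty_iff_forall_notMem.mp hYv
  have hYu : Y ⊆ u := by
    intro y hy
    rcases hcov (Set.mem_univ y) with h | h
    · exact h
    · exact absurd ⟨hy, h⟩ (hYv' y)
  -- v is t-open
  have hvt : IsOpen v := by
    rw [isOpen_iff_mem_nhds]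
    intro x hx
    obtain ⟨W, hW, hxW, h⟩ := stmt6_key v hv x hx
    rcases h with h | ⟨S, hS, hxS, h⟩
    · exact Filter.mem_of_superset (IsOpen.mem_nhds hW hxW) h
    · obtain ⟨y, hyS, rfl⟩ := hxS
      exact absurd ⟨hYu y.2, hx⟩ (hdisj' y)
  -- u is t-open
  have hut : IsOpen u := by
    rw [isOpen_iff_mem_nhds]
    intro x hx
    obtain ⟨W, hW, hxW, h⟩ := stmt6_key u hu x hx
    rcases h with h | ⟨S, hS, hxS, h⟩
    · exact Filter.mem_of_superset (IsOpen.mem_nhds hW hxW) h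
    · refine Filter.mem_of_superset (IsOpen.mem_nhds hW hxW) ?_
      intro z hzW
      by_contra hzu
      have hzv : z ∈ v := (hcov (Set.mem_univ z)).resolve_left hzu
      have hzcl : z ∈ closure Y := by
        by_contra hzcl
        exact hzu (h ⟨hzW, Or.inr hzcl⟩)
      obtain ⟨w, ⟨hwW, hwv⟩, hwY⟩ :=
        _root_.mem_closure_iff.mp hzcl (W ∩ v) (IsOpen.inter hW hvt) ⟨hzW, hzv⟩
      exact hdisj' w ⟨hYu hwY, hwv⟩
  obtain ⟨z, _, hz⟩ := hX.isPreconnected_univ u v hut hvt hcov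
    (hune.imp fun a ha => ⟨Set.mem_univ a, ha⟩)
    (hvne.imp fun a ha => ⟨Set.mem_univ a, ha⟩)
  exact hdisj' z hz

end Stmt6Aux

/-- for a connected space `(X, τ)`, a subspace `Y`, and a connected
expansion `σ*` of the subspace topology `σ = τ|Y`, the topology
`τ* = τ ∨ {S ∪ (X \ cl Y) : S ∈ σ*}` is a connected expansion of `τ` with `τ*|Y = σ*`. -/
theorem stmt_6 {X : Type*} [t : TopologicalSpace X] (hX : ConnectedSpace X) (Y : Set X)
    (σs : TopologicalSpace Y)
    (hexp : σs ≤ TopologicalSpace.induced (fun y : Y => (y : X)) t)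
    (hconn : @ConnectedSpace Y σs) :
    ∃ ts : TopologicalSpace X, ts ≤ t ∧ @ConnectedSpace X ts ∧
      TopologicalSpace.induced (fun y : Y => (y : X)) ts = σs ∧
      ts = TopologicalSpace.generateFrom
        ({B : Set X | ∃ S : Set Y, σs.IsOpen S ∧
            B = (fun y : Y => (y : X)) '' S ∪ (closure Y)ᶜ} ∪ {U | t.IsOpen U}) := by
  refine ⟨TopologicalSpace.generateFrom
    ({B : Set X | ∃ S : Set Y, σs.IsOpen S ∧
        B = (fun y : Y => (y : X)) '' S ∪ (closure Y)ᶜ} ∪ {U | t.IsOpen U}), ?_, ?_, ?_, ?_⟩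
  · -- finer than t
    rw [TopologicalSpace.le_def]
    intro U hU
    exact TopologicalSpace.GenerateOpen.basic U (Or.inr hU)
  · -- connected
    have hpre : @IsPreconnected X (TopologicalSpace.generateFrom
        ({B : Set X | ∃ S : Set Y, σs.IsOpen S ∧
            B = (fun y : Y => (y : X)) '' S ∪ (closure Y)ᶜ} ∪ {U | t.IsOpen U}))
        Set.univ := by
      rintro u v hu hv hcov ⟨x, _, hxu⟩ ⟨y, _, hyv⟩
      rw [Set.nonempty_iff_ne_empty]
      intro hne
      have hdisj : u ∩ v = ∅ := by
        rw [Set.eq_empty_iff_forall_notMem]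
        intro z hz
        exact Set.eq_empty_iff_forall_notMem.mp hne z ⟨Set.mem_univ z, hz⟩
      by_cases hYv : Y ∩ v = ∅
      · exact stmt6_main hX u v hu hv hcov hdisj hYv ⟨x, hxu⟩ ⟨y, hyv⟩
      · by_cases hYu : Y ∩ u = ∅
        · exact stmt6_main hX v u hv hu (by rwa [Set.union_comm])
            (by rwa [Set.inter_comm]) hYu ⟨y, hyv⟩ ⟨x, hxu⟩
        · obtain ⟨a, haY, hau⟩ := Set.nonempty_iff_ne_empty.mpr hYu
          obtain ⟨b, hbY, hbv⟩ := Set.nonempty_iff_ne_empty.mpr hYv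
          obtain ⟨z, _, hzu, hzv⟩ := hconn.isPreconnected_univ
            ((fun y : Y => (y : X)) ⁻¹' u) ((fun y : Y => (y : X)) ⁻¹' v)
            (stmt6_pre hexp u hu) (stmt6_pre hexp v hv)
            (fun w _ => hcov (Set.mem_univ ((w : Y) : X)))
            ⟨⟨a, haY⟩, Set.mem_univ _, hau⟩ ⟨⟨b, hbY⟩, Set.mem_univ _, hbv⟩
          exact Set.eq_empty_iff_forall_notMem.mp hdisj _ ⟨hzu, hzv⟩
    exact @ConnectedSpace.mk X (TopologicalSpace.generateFrom
      ({B : Set X | ∃ S : Set Y, σs.IsOpen S ∧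
          B = (fun y : Y => (y : X)) '' S ∪ (closure Y)ᶜ} ∪ {U | t.IsOpen U}))
      (@PreconnectedSpace.mk X (TopologicalSpace.generateFrom
        ({B : Set X | ∃ S : Set Y, σs.IsOpen S ∧
            B = (fun y : Y => (y : X)) '' S ∪ (closure Y)ᶜ} ∪ {U | t.IsOpen U})) hpre)
      hX.toNonempty
  · -- induced topology equals σs
    apply le_antisymm
    · rw [TopologicalSpace.le_def]
      intro S hS
      exact ⟨(fun y : Y => (y : X)) '' S ∪ (closure Y)ᶜ,
        TopologicalSpace.GenerateOpen.basic _ (Or.inl ⟨S, hS, rfl⟩), stmt6_preim Y S⟩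
    · rw [TopologicalSpace.le_def]
      intro S hS
      obtain ⟨U, hU, rfl⟩ := hS
      exact stmt6_pre hexp U hU
  · -- the self-referential closure equation
    set g : Set (Set X) := ({B : Set X | ∃ S : Set Y, σs.IsOpen S ∧
        B = (fun y : Y => (y : X)) '' S ∪ (closure Y)ᶜ} ∪ {U | t.IsOpen U}) with hg
    have hcl : @closure X (TopologicalSpace.generateFrom g) Y = closure Y := by
      apply Set.Subset.antisymm
      · have hclosed : @IsClosed X (TopologicalSpace.generateFrom g) (closure Y) := by
          rw [← @isOpen_compl_iff X (closure Y) (TopologicalSpace.generateFrom g)]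
          exact TopologicalSpace.GenerateOpen.basic _
            (Or.inr (isOpen_compl_iff.mpr isClosed_closure))
        exact @closure_minimal X (TopologicalSpace.generateFrom g) Y (closure Y)
          subset_closure hclosed
      · intro x hx
        by_contra hx'
        have hopen : TopologicalSpace.GenerateOpen g
            ((@closure X (TopologicalSpace.generateFrom g) Y)ᶜ) :=
          (@isOpen_compl_iff X (@closure X (TopologicalSpace.generateFrom g) Y)
            (TopologicalSpace.generateFrom g)).mpr
            (@isClosed_closure X (TopologicalSpace.generateFrom g) Y)
        have hsub : Y ⊆ @closure X (TopologicalSpace.generateFrom g) Y :=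
          @subset_closure X (TopologicalSpace.generateFrom g) Y
        rw [hg] at hopen
        obtain ⟨W, hW, hxW, h⟩ := stmt6_key _ hopen x hx'
        rcases h with h | ⟨S, hS, hxS, h⟩
        · obtain ⟨w, hwW, hwY⟩ := _root_.mem_closure_iff.mp hx W hW hxW
          exact (h hwW) (hsub hwY)
        · obtain ⟨y, _, rfl⟩ := hxS
          exact hx' (hsub y.2)
    rw [hcl, hg]
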